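/- arXiv:1707.03487 — 3 statements merged into one kernel-verified Lean document; each statement's English description precedes it below -/
import Mathlib

section
/- Let x_1, …, x_m be positive real numbers with m ≥ 2, not all equal, let x̄ = (1/m)∑ x_i be their mean, and fix q ∈ (0,1). Define g(θ) = ∑_{i=1}^m exp(−(1−q)x_i/θ)(x_i − θ) for θ > 0. Then for every θ ≥ x̄, g(θ) < 0. -/
open Real Finset

lemma mlq_aux (q θ t : ℝ) (hq1 : q < 1) (hθ : 0 < θ) :
    Real.exp (-(1 - q) * t / θ) * (t - θ) ≤ Real.exp (-(1 - q)) * (t - θ) ∧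
    (t ≠ θ → Real.exp (-(1 - q) * t / θ) * (t - θ) < Real.exp (-(1 - q)) * (t - θ)) := by
  rcases lt_trichotomy t θ with h | h | h
  · have hexp : Real.exp (-(1 - q)) < Real.exp (-(1 - q) * t / θ) := by
      apply Real.exp_lt_exp.mpr
      rw [lt_div_iff₀ hθ]
      nlinarith
    have hlt := mul_lt_mul_of_neg_right hexp (by linarith : t - θ < 0)
    exact ⟨le_of_lt hlt, fun _ => hlt⟩
  · rw [h]
    have h2 : -(1 - q) * θ / θ = -(1 - q) := by field_simp
    rw [h2]
    exact ⟨le_refl _, fun h' => absurd rfl h'⟩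
  · have hexp : Real.exp (-(1 - q) * t / θ) < Real.exp (-(1 - q)) := by
      apply Real.exp_lt_exp.mpr
      rw [div_lt_iff₀ hθ]
      nlinarith
    have hlt := mul_lt_mul_of_pos_right hexp (by linarith : 0 < t - θ)
    exact ⟨le_of_lt hlt, fun _ => hlt⟩

theorem mlq_negative_above_mean (m : ℕ) (hm : 2 ≤ m) (x : Fin m → ℝ)
    (hpos : ∀ i, 0 < x i) (hne : ¬ ∀ i j, x i = x j) (q : ℝ) (hq : q ∈ Set.Ioo (0:ℝ) 1)
    (xbar : ℝ) (hxbar : xbar = (∑ i, x i) / m)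
    (g : ℝ → ℝ)
    (hg : ∀ θ, g θ = ∑ i, Real.exp (-(1 - q) * x i / θ) * (x i - θ)) :
    ∀ θ, xbar ≤ θ → g θ < 0 := by
  obtain ⟨hq0, hq1⟩ := hq
  intro θ hθ
  have hm0 : (0:ℝ) < m := by
    have : (2:ℝ) ≤ m := by exact_mod_cast hm
    linarith
  have hsum_pos : 0 < ∑ i, x i := by
    apply Finset.sum_pos (fun i _ => hpos i)
    haveI : Nonempty (Fin m) := ⟨⟨0, by omega⟩⟩
    exact Finset.univ_nonempty
  have hxbar_pos : 0 < xbar := by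
    rw [hxbar]; positivity
  have hθpos : 0 < θ := lt_of_lt_of_le hxbar_pos hθ
  push_neg at hne
  obtain ⟨i0, j0, hij⟩ := hne
  have hk : ∃ k, x k ≠ θ := by
    by_contra h
    push_neg at h
    exact hij ((h i0).trans (h j0).symm)
  obtain ⟨k, hk⟩ := hk
  rw [hg]
  have hstep : ∑ i, Real.exp (-(1 - q) * x i / θ) * (x i - θ)
      < ∑ i, Real.exp (-(1 - q)) * (x i - θ) := by
    apply Finset.sum_lt_sum
    · exact fun i _ => (mlq_aux q θ (x i) hq1 hθpos).1
    · exact ⟨k, Finset.mem_univ k, (mlq_aux q θ (x k) hq1 hθpos).2 hk⟩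
  refine lt_of_lt_of_le hstep ?_
  rw [← Finset.mul_sum]
  apply mul_nonpos_of_nonneg_of_nonpos (le_of_lt (Real.exp_pos _))
  rw [Finset.sum_sub_distrib, Finset.sum_const, Finset.card_univ, Fintype.card_fin,
    nsmul_eq_mul]
  have hsum : ∑ i, x i = m * xbar := by
    rw [hxbar]; field_simp
  rw [hsum]
  nlinarith
end

section
/- Let x_1, …, x_m be positive real numbers with m ≥ 2, not all equal, let x̄ be their mean, and fix q ∈ (0,1). Define g(θ) = ∑_{i=1}^m exp(−(1−q)x_i/θ)(x_i − θ). Then g(θ) > 0 whenever 0 < θ < min_i x_i, and g(θ) → 0 as θ → 0⁺; consequently, by continuity, g has at least one root in the interval (min_i x_i, x̄). -/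
open Real Finset Filter

theorem mlq_root_exists (m : ℕ) (hm : 2 ≤ m) (x : Fin m → ℝ)
    (hpos : ∀ i, 0 < x i) (hne : ¬ ∀ i j, x i = x j) (q : ℝ) (hq : q ∈ Set.Ioo (0:ℝ) 1)
    (xbar : ℝ) (hxbar : xbar = (∑ i, x i) / m)
    (xmin : ℝ) (hxmin : xmin = Finset.univ.inf' (Finset.univ_nonempty_iff.mpr (Fin.pos_iff_nonempty.mp (by omega))) x)
    (g : ℝ → ℝ)
    (hg : ∀ θ, g θ = ∑ i, Real.exp (-(1 - q) * x i / θ) * (x i - θ)) :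
    (∀ θ, 0 < θ → θ < xmin → 0 < g θ) ∧
    Tendsto g (nhdsWithin 0 (Set.Ioi 0)) (nhds 0) ∧
    ∃ θ ∈ Set.Ioo xmin xbar, g θ = 0 := by
  have hmpos : (0:ℝ) < m := by positivity
  have hne' : (Finset.univ : Finset (Fin m)).Nonempty := Finset.univ_nonempty_iff.mpr (Fin.pos_iff_nonempty.mp (by omega : 0 < m))
  have hminle : ∀ i, xmin ≤ x i := by
    intro i; rw [hxmin]; exact Finset.inf'_le _ (Finset.mem_univ i)
  have hminpos : 0 < xmin := by
    obtain ⟨i, _, hi⟩ := Finset.exists_mem_eq_inf' hne' x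
    rw [hxmin]; exact hi ▸ hpos i
  have hq1 : 0 < 1 - q := by linarith [hq.2]
  -- some index strictly above the min
  have hexm : ∃ i, xmin < x i := by
    by_contra h
    push_neg at h
    have hall : ∀ i, x i = xmin := fun i => le_antisymm (h i) (hminle i)
    exact hne fun i j => by rw [hall i, hall j]
  -- xbar positive and xmin < xbar
  have hsum : ∑ i, x i = m * xbar := by
    rw [hxbar]; field_simp
  have hminlt : xmin < xbar := by
    obtain ⟨j, hj⟩ := hexm
    have : (m : ℝ) * xmin < ∑ i, x i := by
      calc (m:ℝ) * xmin = ∑ _i : Fin m, xmin := by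
            simp [Finset.sum_const, Finset.card_univ, mul_comm]
        _ < ∑ i, x i := Finset.sum_lt_sum (fun i _ => hminle i) ⟨j, Finset.mem_univ j, hj⟩
    rw [hsum] at this
    exact lt_of_mul_lt_mul_left this (le_of_lt hmpos)
  have hbarpos : 0 < xbar := lt_trans hminpos hminlt
  -- Part 1
  have part1 : ∀ θ, 0 < θ → θ < xmin → 0 < g θ := by
    intro θ hθ hθm
    rw [hg]
    apply Finset.sum_pos _ hne'
    intro i _
    exact mul_pos (Real.exp_pos _) (sub_pos.mpr (lt_of_lt_of_le hθm (hminle i)))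
  -- Part 2
  have part2 : Tendsto g (nhdsWithin 0 (Set.Ioi 0)) (nhds 0) := by
    have hgl : g = fun θ => ∑ i, Real.exp (-(1 - q) * x i / θ) * (x i - θ) := funext hg
    rw [hgl]
    have : Tendsto (fun θ : ℝ => ∑ i, Real.exp (-(1 - q) * x i / θ) * (x i - θ))
        (nhdsWithin 0 (Set.Ioi 0)) (nhds (∑ _i : Fin m, (0:ℝ))) := by
      apply tendsto_finset_sum
      intro i _
      have h1 : Tendsto (fun θ : ℝ => -(1 - q) * x i / θ) (nhdsWithin 0 (Set.Ioi 0)) atBot := by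
        have : Tendsto (fun θ : ℝ => (-(1 - q) * x i) * θ⁻¹) (nhdsWithin 0 (Set.Ioi 0)) atBot := by
          apply Tendsto.const_mul_atTop_of_neg
          · have := hpos i; nlinarith
          · exact tendsto_inv_nhdsGT_zero
        simpa [div_eq_mul_inv] using this
      have h2 : Tendsto (fun θ : ℝ => Real.exp (-(1 - q) * x i / θ))
          (nhdsWithin 0 (Set.Ioi 0)) (nhds 0) := Real.tendsto_exp_atBot.comp h1
      have h3 : Tendsto (fun θ : ℝ => x i - θ) (nhdsWithin 0 (Set.Ioi 0)) (nhds (x i)) := by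
        have hc : Continuous (fun θ : ℝ => x i - θ) := continuous_const.sub continuous_id
        simpa using (hc.tendsto 0).mono_left nhdsWithin_le_nhds
      simpa using h2.mul h3
    simpa using this
  refine ⟨part1, part2, ?_⟩
  -- g(xmin) > 0
  have hgmin : 0 < g xmin := by
    rw [hg]
    apply Finset.sum_pos'
    · intro i _
      exact mul_nonneg (Real.exp_pos _).le (sub_nonneg.mpr (hminle i))
    · obtain ⟨j, hj⟩ := hexm
      exact ⟨j, Finset.mem_univ j, mul_pos (Real.exp_pos _) (sub_pos.mpr hj)⟩
  -- g(xbar) < 0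
  have hgbar : g xbar < 0 := by
    rw [hg]
    have hb : ∑ i, Real.exp (-(1 - q)) * (x i - xbar) = 0 := by
      rw [← Finset.mul_sum, Finset.sum_sub_distrib]
      simp only [hsum, Finset.sum_const, Finset.card_univ, Fintype.card_fin, nsmul_eq_mul]
      ring
    have hexbar : ∃ i, x i ≠ xbar := by
      by_contra h
      push_neg at h
      exact hne fun i j => by rw [h i, h j]
    have key : ∀ i, x i ≠ xbar →
        Real.exp (-(1 - q) * x i / xbar) * (x i - xbar) < Real.exp (-(1 - q)) * (x i - xbar) := by
      intro i hi
      rcases lt_or_gt_of_ne hi with hlt | hgt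
      · -- x i < xbar : exp bigger, factor negative
        have he : Real.exp (-(1 - q)) < Real.exp (-(1 - q) * x i / xbar) := by
          apply Real.exp_lt_exp.mpr
          rw [lt_div_iff₀ hbarpos]
          nlinarith [hpos i]
        have := mul_lt_mul_of_neg_right he (sub_neg.mpr hlt)
        linarith
      · have he : Real.exp (-(1 - q) * x i / xbar) < Real.exp (-(1 - q)) := by
          apply Real.exp_lt_exp.mpr
          rw [div_lt_iff₀ hbarpos]
          nlinarith
        exact mul_lt_mul_of_pos_right he (sub_pos.mpr hgt)
    have hle : ∀ i ∈ Finset.univ, Real.exp (-(1 - q) * x i / xbar) * (x i - xbar) ≤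
        Real.exp (-(1 - q)) * (x i - xbar) := by
      intro i _
      by_cases hi : x i = xbar
      · simp [hi]
      · exact (key i hi).le
    obtain ⟨j, hj⟩ := hexbar
    have := Finset.sum_lt_sum hle ⟨j, Finset.mem_univ j, key j hj⟩
    linarith [hb ▸ this]
  -- continuity on [xmin, xbar]
  have hcont : ContinuousOn g (Set.Icc xmin xbar) := by
    have hgl : g = fun θ => ∑ i, Real.exp (-(1 - q) * x i / θ) * (x i - θ) := funext hg
    rw [hgl]
    apply continuousOn_finset_sum
    intro i _
    apply ContinuousOn.mul
    · apply Real.continuous_exp.comp_continuousOn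
      apply ContinuousOn.div continuousOn_const continuousOn_id
      intro θ hθ
      exact ne_of_gt (lt_of_lt_of_le hminpos hθ.1)
    · exact (continuous_const.sub continuous_id).continuousOn
  have hsub := intermediate_value_Ioo' hminlt.le hcont
  have h0 : (0:ℝ) ∈ Set.Ioo (g xbar) (g xmin) := ⟨hgbar, hgmin⟩
  obtain ⟨θ, hθ, hθ0⟩ := hsub h0
  exact ⟨θ, hθ, hθ0⟩
end

section
/- Fix q ∈ (0,1), ε ∈ (0,1), 0 < p < c, and let μ = (1−ε)p + εc. Define h(θ) = (c(1−q) + θ)²(1−ε)(pq − θ) − (p(1−q) + θ)² ε(θ − cq). Then h(μ) < 0. -/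
theorem h_at_population_mean_neg (q ε p c : ℝ)
    (hq : q ∈ Set.Ioo (0:ℝ) 1) (hε : ε ∈ Set.Ioo (0:ℝ) 1)
    (hp : 0 < p) (hpc : p < c)
    (μ : ℝ) (hμ : μ = (1 - ε) * p + ε * c)
    (h : ℝ → ℝ)
    (hh : ∀ θ, h θ = (c * (1 - q) + θ) ^ 2 * (1 - ε) * (p * q - θ) -
      (p * (1 - q) + θ) ^ 2 * ε * (θ - c * q)) :
    h μ < 0 := by
  obtain ⟨hq0, hq1⟩ := hq
  obtain ⟨hε0, hε1⟩ := hε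
  rw [hh, hμ]
  set A := c * (1 - q) + ((1 - ε) * p + ε * c) with hA
  set B := p * (1 - q) + ((1 - ε) * p + ε * c) with hB
  have hB0 : 0 < B := by rw [hB]; nlinarith
  have hAB : B < A := by rw [hA, hB]; nlinarith
  have hA0 : 0 < A := lt_trans hB0 hAB
  set X := (1 - ε) * (p * (1 - q) + ε * (c - p)) with hX
  set Y := ε * (c * q - ((1 - ε) * p + ε * c)) with hY
  have hX0 : 0 < X := by
    rw [hX]
    have h1 : 0 < p * (1 - q) + ε * (c - p) := by nlinarith
    have h2 : 0 < 1 - ε := by linarith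
    exact mul_pos h2 h1
  have hXY : Y < X := by rw [hX, hY]; nlinarith
  have key : A ^ 2 * (1 - ε) * (p * q - ((1 - ε) * p + ε * c)) -
      B ^ 2 * ε * (((1 - ε) * p + ε * c) - c * q) = -(A ^ 2 * X) + B ^ 2 * Y := by
    rw [hX, hY]; ring
  rw [key]
  rcases le_or_gt Y 0 with hY0 | hY0
  · nlinarith [mul_pos (mul_pos hA0 hA0) hX0,
      mul_nonpos_of_nonneg_of_nonpos (sq_nonneg B) hY0]
  · nlinarith [mul_pos (mul_pos hB0 hB0) (sub_pos.mpr hXY),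
      mul_pos hX0 (mul_pos (sub_pos.mpr hAB) (add_pos hB0 hA0))]
end
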